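/- Let q_a = (0, p_a), q_b = (0, p_b) be pure unit quaternions with angle θ ∈ (0, π) between p_a and p_b. Then for every t ∈ [0,1], the quaternion SLERP q_a ((q_a)⁻¹ q_b)ᵗ is a pure quaternion (0, p(t)) with ‖p(t)‖ = 1. -/

import Mathlib

open Matrix Real

noncomputable def quat (a : ℝ) (u : Fin 3 → ℝ) : Quaternion ℝ := ⟨a, u 0, u 1, u 2⟩

noncomputable def norm3 (u : Fin 3 → ℝ) : ℝ := Real.sqrt (u ⬝ᵥ u)

/-- The real power `r^t` of the unit quaternion `r = (cos k, sin k · w)`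
(with `w` a unit vector), namely `(cos (t k), sin (t k) • w)`. -/
noncomputable def qpow (k : ℝ) (w : Fin 3 → ℝ) (t : ℝ) : Quaternion ℝ :=
  quat (Real.cos (t * k)) (Real.sin (t * k) • w)

/-- Quaternion SLERP `q_a ((q_a)⁻¹ q_b)ᵗ` between pure unit quaternions stays a
pure unit quaternion.  Here `(q_a)⁻¹ q_b = (cos θ, sin θ • w)` with
`w = −(p_a × p_b)/sin θ`. -/
theorem quaternion_slerp_pure_unit (θ : ℝ) (pa pb : Fin 3 → ℝ)
    (hpa : norm3 pa = 1) (hpb : norm3 pb = 1)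
    (hθ : 0 < θ) (hθπ : θ < Real.pi) (hdot : pa ⬝ᵥ pb = Real.cos θ) :
    ∀ t ∈ Set.Icc (0 : ℝ) 1,
      ∃ p : Fin 3 → ℝ,
        quat 0 pa * qpow θ ((Real.sin θ)⁻¹ • (-(crossProduct pa pb))) t = quat 0 p ∧
        norm3 p = 1 := by
  intro t _
  have hs0 : 0 < Real.sin θ := Real.sin_pos_of_pos_of_lt_pi hθ hθπ
  have hs : Real.sin θ ≠ 0 := ne_of_gt hs0
  have hnna : 0 ≤ pa ⬝ᵥ pa := by
    simp only [dotProduct, Fin.sum_univ_three]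
    nlinarith [mul_self_nonneg (pa 0), mul_self_nonneg (pa 1), mul_self_nonneg (pa 2), mul_self_nonneg (pb 0), mul_self_nonneg (pb 1), mul_self_nonneg (pb 2)]
  have hnnb : 0 ≤ pb ⬝ᵥ pb := by
    simp only [dotProduct, Fin.sum_univ_three]
    nlinarith [mul_self_nonneg (pa 0), mul_self_nonneg (pa 1), mul_self_nonneg (pa 2), mul_self_nonneg (pb 0), mul_self_nonneg (pb 1), mul_self_nonneg (pb 2)]
  have hpa2 : pa ⬝ᵥ pa = 1 := by
    have h := hpa; unfold norm3 at h
    nlinarith [Real.sq_sqrt hnna]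
  have hpb2 : pb ⬝ᵥ pb = 1 := by
    have h := hpb; unfold norm3 at h
    nlinarith [Real.sq_sqrt hnnb]
  have hpa2' : pa 0 * pa 0 + pa 1 * pa 1 + pa 2 * pa 2 = 1 := by
    simpa [dotProduct, Fin.sum_univ_three] using hpa2
  have hpb2' : pb 0 * pb 0 + pb 1 * pb 1 + pb 2 * pb 2 = 1 := by
    simpa [dotProduct, Fin.sum_univ_three] using hpb2
  have hdot' : pa 0 * pb 0 + pa 1 * pb 1 + pa 2 * pb 2 = Real.cos θ := by
    simpa [dotProduct, Fin.sum_univ_three] using hdot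
  have hpyθ : Real.sin θ ^ 2 + Real.cos θ ^ 2 = 1 := Real.sin_sq_add_cos_sq θ
  have hpyt : Real.sin (t * θ) ^ 2 + Real.cos (t * θ) ^ 2 = 1 :=
    Real.sin_sq_add_cos_sq (t * θ)
  refine ⟨fun i => Real.cos (t * θ) * pa i +
      (Real.sin (t * θ) / Real.sin θ) * (pb i - Real.cos θ * pa i), ?_, ?_⟩
  · unfold quat qpow quat
    ext
    · erw [Quaternion.re_mul]
      simp only [Quaternion.re_mul, cross_apply, Pi.smul_apply, Pi.neg_apply,
        smul_eq_mul, Matrix.cons_val_zero, Matrix.cons_val_one, Matrix.head_cons,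
        Matrix.cons_val_two, Matrix.tail_cons]
      field_simp
      ring
    · erw [Quaternion.imI_mul]
      simp only [Quaternion.imI_mul, cross_apply, Pi.smul_apply, Pi.neg_apply,
        smul_eq_mul, Matrix.cons_val_zero, Matrix.cons_val_one, Matrix.head_cons,
        Matrix.cons_val_two, Matrix.tail_cons]
      field_simp
      linear_combination (Real.sin (t * θ) * pb 0) * hpa2' -
        (Real.sin (t * θ) * pa 0) * hdot'
    · erw [Quaternion.imJ_mul]
      simp only [Quaternion.imJ_mul, cross_apply, Pi.smul_apply, Pi.neg_apply,
        smul_eq_mul, Matrix.cons_val_zero, Matrix.cons_val_one, Matrix.head_cons,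
        Matrix.cons_val_two, Matrix.tail_cons]
      field_simp
      linear_combination (Real.sin (t * θ) * pb 1) * hpa2' -
        (Real.sin (t * θ) * pa 1) * hdot'
    · erw [Quaternion.imK_mul]
      simp only [Quaternion.imK_mul, cross_apply, Pi.smul_apply, Pi.neg_apply,
        smul_eq_mul, Matrix.cons_val_zero, Matrix.cons_val_one, Matrix.head_cons,
        Matrix.cons_val_two, Matrix.tail_cons]
      field_simp
      linear_combination (Real.sin (t * θ) * pb 2) * hpa2' -
        (Real.sin (t * θ) * pa 2) * hdot'
  · unfold norm3
    have : (fun i => Real.cos (t * θ) * pa i +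
        (Real.sin (t * θ) / Real.sin θ) * (pb i - Real.cos θ * pa i)) ⬝ᵥ
        (fun i => Real.cos (t * θ) * pa i +
        (Real.sin (t * θ) / Real.sin θ) * (pb i - Real.cos θ * pa i)) = 1 := by
      simp only [dotProduct, Fin.sum_univ_three]
      field_simp
      linear_combination
        (Real.cos (t * θ) ^ 2 * Real.sin θ ^ 2) * hpa2' +
        Real.sin (t * θ) ^ 2 * hpb2' +
        (Real.sin (t * θ) ^ 2 * Real.cos θ ^ 2) * hpa2' -
        (2 * Real.sin (t * θ) ^ 2 * Real.cos θ) * hdot' +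
        (2 * Real.cos (t * θ) * Real.sin (t * θ) * Real.sin θ) * hdot' -
        (2 * Real.cos (t * θ) * Real.sin (t * θ) * Real.sin θ * Real.cos θ) * hpa2' +
        Real.sin θ ^ 2 * hpyt - Real.sin (t * θ) ^ 2 * hpyθ
    rw [this, Real.sqrt_one]
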